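/- Let μ, μ' ∈ R^d with ‖μ‖ = ‖μ'‖, and let P_θ denote the equal-weights mixture (1/2)N(-μ/2, σ²I) + (1/2)N(μ/2, σ²I), and P_{θ'} the analogous mixture with μ'. Set ξ = ‖μ‖/(2σ) and cos β = |μᵀμ'|/‖μ‖². Then KL(P_θ, P_{θ'}) ≤ ξ⁴(1 - cos β). -/

import Mathlib

open MeasureTheory Real

variable {d : ℕ}

/-- Density of `N(m, σ² I_d)` on `ℝ^d`. -/
noncomputable def gaussDen (σ : ℝ) (m x : EuclideanSpace ℝ (Fin d)) : ℝ :=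
  (2 * Real.pi * σ ^ 2) ^ (-(d : ℝ) / 2) * Real.exp (-‖x - m‖ ^ 2 / (2 * σ ^ 2))

/-- Density of the symmetric mixture `(1/2) N(-μ/2, σ²I) + (1/2) N(μ/2, σ²I)`. -/
noncomputable def mixDen (σ : ℝ) (μ : EuclideanSpace ℝ (Fin d)) (x : EuclideanSpace ℝ (Fin d)) : ℝ :=
  1 / 2 * gaussDen σ (-((1 / 2 : ℝ) • μ)) x + 1 / 2 * gaussDen σ ((1 / 2 : ℝ) • μ) x

section Aux

-- abbreviation
noncomputable def lch (t : ℝ) : ℝ := Real.log (Real.cosh t)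

lemma lch_abs_le (t : ℝ) : |lch t| ≤ |t| := by
  have h1 : 0 ≤ lch t := Real.log_nonneg (Real.one_le_cosh t)
  rw [abs_of_nonneg h1]
  rw [lch, Real.log_le_iff_le_exp (Real.cosh_pos t)]
  rw [← Real.cosh_abs, Real.cosh_eq]
  have h2 : Real.exp (-|t|) ≤ Real.exp |t| :=
    Real.exp_le_exp.2 (neg_le_self (abs_nonneg t))
  linarith

lemma continuous_lch : Continuous lch :=
  Real.continuous_cosh.log (fun t => (Real.cosh_pos t).ne')

/-- positivity of the mixture density -/
lemma mixDen_pos {σ : ℝ} (hσ : 0 < σ) (μ x : EuclideanSpace ℝ (Fin d)) :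
    0 < mixDen σ μ x := by
  have hK : (0:ℝ) < (2 * Real.pi * σ ^ 2) ^ (-(d : ℝ) / 2) :=
    Real.rpow_pos_of_pos (by positivity) _
  have h1 : 0 < gaussDen σ (-((1 / 2 : ℝ) • μ)) x := mul_pos hK (Real.exp_pos _)
  have h2 : 0 < gaussDen σ ((1 / 2 : ℝ) • μ) x := mul_pos hK (Real.exp_pos _)
  have : (0:ℝ) < 1/2 := by norm_num
  unfold mixDen; nlinarith

lemma mixDen_neg_arg (σ : ℝ) (μ' x : EuclideanSpace ℝ (Fin d)) :
    mixDen σ (-μ') x = mixDen σ μ' x := by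
  unfold mixDen
  rw [smul_neg, neg_neg, add_comm]

/-- 1D integrability of the Gaussian times `lch (κ t + a)`. -/
lemma int1D {σ : ℝ} (hσ : 0 < σ) (κ a : ℝ) :
    Integrable (fun t : ℝ => Real.exp (-t ^ 2 / (2 * σ ^ 2)) * lch (κ * t + a)) := by
  have hb : (0:ℝ) < (2 * σ ^ 2)⁻¹ := by positivity
  have heq : ∀ t : ℝ, -t ^ 2 / (2 * σ ^ 2) = -(2 * σ ^ 2)⁻¹ * t ^ 2 := fun t => by ring
  have hdom : Integrable (fun t : ℝ =>
      |κ| * (|t| * Real.exp (-(2 * σ ^ 2)⁻¹ * t ^ 2))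
        + |a| * Real.exp (-(2 * σ ^ 2)⁻¹ * t ^ 2)) := by
    apply Integrable.add
    · apply Integrable.const_mul
      have := (integrable_mul_exp_neg_mul_sq hb).abs
      refine this.congr ?_
      filter_upwards with t
      rw [abs_mul, abs_of_nonneg (Real.exp_pos _).le]
    · exact (integrable_exp_neg_mul_sq hb).const_mul _
  apply Integrable.mono' hdom
  · apply Continuous.aestronglyMeasurable
    apply Continuous.mul
    · exact Real.continuous_exp.comp (by continuity)
    · exact continuous_lch.comp (by continuity)
  · filter_upwards with t
    rw [norm_mul, Real.norm_eq_abs, Real.norm_eq_abs, abs_of_nonneg (Real.exp_pos _).le, heq]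
    have h1 : |lch (κ * t + a)| ≤ |κ| * |t| + |a| := by
      calc |lch (κ * t + a)| ≤ |κ * t + a| := lch_abs_le _
        _ ≤ |κ * t| + |a| := abs_add_le _ _
        _ = |κ| * |t| + |a| := by rw [abs_mul]
    nlinarith [Real.exp_pos (-(2 * σ ^ 2)⁻¹ * t ^ 2), (Real.exp_pos (-(2 * σ ^ 2)⁻¹ * t ^ 2)).le,
      abs_nonneg (lch (κ * t + a))]

end Aux


section OneD

/-- `sinh t ≤ t * cosh t` for `t ≥ 0`. -/
lemma sinh_le_mul_cosh {t : ℝ} (ht : 0 ≤ t) : Real.sinh t ≤ t * Real.cosh t := by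
  have h : ∀ x : ℝ, HasDerivAt (fun y => y * Real.cosh y - Real.sinh y) (x * Real.sinh x) x := by
    intro x
    have := ((hasDerivAt_id' x).mul (Real.hasDerivAt_cosh x)).sub (Real.hasDerivAt_sinh x)
    refine this.congr_deriv ?_
    simp [id_eq]

  have hm : Monotone (fun y => y * Real.cosh y - Real.sinh y) := by
    apply monotone_of_deriv_nonneg (fun x => (h x).differentiableAt)
    intro x
    rw [(h x).deriv]
    rcases le_or_gt 0 x with hx | hx
    · exact mul_nonneg hx (Real.sinh_nonneg_iff.2 hx)
    · have hs : Real.sinh x ≤ 0 := by simpa using Real.sinh_le_sinh.2 hx.le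
      nlinarith
  have := hm ht
  simpa using this

/-- `log cosh α - log cosh γ ≤ (α² - γ²)/2` for `0 ≤ γ ≤ α`. -/
lemma logcosh_sub_le {γ α : ℝ} (hγ : 0 ≤ γ) (hγα : γ ≤ α) :
    Real.log (Real.cosh α) - Real.log (Real.cosh γ) ≤ (α ^ 2 - γ ^ 2) / 2 := by
  have h : ∀ x : ℝ, HasDerivAt (fun y => y ^ 2 / 2 - Real.log (Real.cosh y))
      (x - Real.sinh x / Real.cosh x) x := by
    intro x
    have h1 : HasDerivAt (fun y : ℝ => y ^ 2 / 2) x x := by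
      simpa using (hasDerivAt_pow 2 x).div_const 2
    have h2 : HasDerivAt (fun y => Real.log (Real.cosh y)) (Real.sinh x / Real.cosh x) x :=
      (Real.hasDerivAt_cosh x).log (Real.cosh_pos x).ne'
    exact h1.sub h2
  have hm : MonotoneOn (fun y => y ^ 2 / 2 - Real.log (Real.cosh y)) (Set.Ici (0:ℝ)) := by
    apply monotoneOn_of_deriv_nonneg (convex_Ici 0)
    · exact fun x _ => ((h x).differentiableAt).continuousAt.continuousWithinAt
    · exact fun x _ => ((h x).differentiableAt).differentiableWithinAt
    · intro x hx
      rw [interior_Ici, Set.mem_Ioi] at hx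
      rw [(h x).deriv]
      have hc := Real.cosh_pos x
      have := sinh_le_mul_cosh hx.le
      rw [sub_nonneg, div_le_iff₀ hc]
      linarith
  have := hm (Set.mem_Ici.2 hγ) (Set.mem_Ici.2 (hγ.trans hγα)) hγα
  simp only at this
  linarith

/-- `cosh(x+a) * cosh(x-a) = cosh² x + cosh² a - 1`. -/
lemma cosh_mul_cosh (x a : ℝ) :
    Real.cosh (x + a) * Real.cosh (x - a) = Real.cosh x ^ 2 + Real.cosh a ^ 2 - 1 := by
  rw [Real.cosh_add, Real.cosh_sub]
  have h1 := Real.sinh_sq x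
  have h2 := Real.sinh_sq a
  nlinarith [Real.sinh_sq x, Real.sinh_sq a]

/-- Key pointwise 1D inequality. -/
lemma key_pointwise_log (x : ℝ) {γ α : ℝ} (hγ : 0 ≤ γ) (hγα : γ ≤ α) :
    Real.log (Real.cosh (x + α)) + Real.log (Real.cosh (x - α))
      - Real.log (Real.cosh (x + γ)) - Real.log (Real.cosh (x - γ)) ≤ 2 * α * (α - γ) := by
  have hcα := Real.cosh_pos (x + α)
  have hcα' := Real.cosh_pos (x - α)
  have hcγ := Real.cosh_pos (x + γ)
  have hcγ' := Real.cosh_pos (x - γ)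
  have hA : (1:ℝ) ≤ Real.cosh x ^ 2 := by nlinarith [Real.one_le_cosh x]
  have hq : (1:ℝ) ≤ Real.cosh γ ^ 2 := by nlinarith [Real.one_le_cosh γ]
  have hpq : Real.cosh γ ^ 2 ≤ Real.cosh α ^ 2 := by
    have : Real.cosh γ ≤ Real.cosh α := by
      rw [Real.cosh_le_cosh, abs_of_nonneg hγ, abs_of_nonneg (hγ.trans hγα)]
      exact hγα
    nlinarith [Real.one_le_cosh γ]
  set A := Real.cosh x ^ 2 with hAdef
  set p := Real.cosh α ^ 2 with hpdef
  set q := Real.cosh γ ^ 2 with hqdef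
  have e1 : Real.log (Real.cosh (x + α)) + Real.log (Real.cosh (x - α))
      = Real.log (A + p - 1) := by
    rw [← Real.log_mul hcα.ne' hcα'.ne', cosh_mul_cosh]
  have e2 : Real.log (Real.cosh (x + γ)) + Real.log (Real.cosh (x - γ))
      = Real.log (A + q - 1) := by
    rw [← Real.log_mul hcγ.ne' hcγ'.ne', cosh_mul_cosh]
  have hAp : (0:ℝ) < A + p - 1 := by nlinarith
  have hAq : (0:ℝ) < A + q - 1 := by nlinarith
  have hq0 : (0:ℝ) < q := by linarith
  have hp0 : (0:ℝ) < p := by linarith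
  -- log (A+p-1) - log (A+q-1) ≤ log p - log q
  have step1 : Real.log (A + p - 1) - Real.log (A + q - 1) ≤ Real.log p - Real.log q := by
    have hcross : (A + p - 1) * q ≤ (A + q - 1) * p := by nlinarith
    have := Real.log_le_log (by positivity) hcross
    rw [Real.log_mul hAp.ne' hq0.ne', Real.log_mul hAq.ne' hp0.ne'] at this
    linarith
  have step2 : Real.log p - Real.log q ≤ α ^ 2 - γ ^ 2 := by
    have hp' : Real.log p = 2 * Real.log (Real.cosh α) := by
      rw [hpdef, Real.log_pow]; push_cast; ring
    have hq' : Real.log q = 2 * Real.log (Real.cosh γ) := by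
      rw [hqdef, Real.log_pow]; push_cast; ring
    have := logcosh_sub_le hγ hγα
    rw [hp', hq']; linarith
  have step3 : α ^ 2 - γ ^ 2 ≤ 2 * α * (α - γ) := by nlinarith
  linarith [e1, e2, step1, step2, step3]

end OneD

lemma key_pointwise (x : ℝ) {γ α : ℝ} (hγ : 0 ≤ γ) (hγα : γ ≤ α) :
    lch (x + α) + lch (x - α) - lch (x + γ) - lch (x - γ) ≤ 2 * α * (α - γ) := by
  simp only [lch]
  exact key_pointwise_log x hγ hγα

section Marg

/-- Marginalization: integral over `ℝ^d` of a Gaussian shape times a function of one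
coordinate direction. -/
lemma marg {d : ℕ} (hd : 0 < d) (σ : ℝ) (hσ : 0 < σ)
    (u : EuclideanSpace ℝ (Fin d)) (hu : ‖u‖ = 1) (F : ℝ → ℝ) :
    ((∫ x : EuclideanSpace ℝ (Fin d), Real.exp (-‖x‖ ^ 2 / (2 * σ ^ 2)) * F (inner ℝ x u))
        = (∫ t : ℝ, Real.exp (-t ^ 2 / (2 * σ ^ 2))) ^ (d - 1)
          * ∫ t : ℝ, Real.exp (-t ^ 2 / (2 * σ ^ 2)) * F t)
    ∧ (Integrable (fun t : ℝ => Real.exp (-t ^ 2 / (2 * σ ^ 2)) * F t) →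
        Integrable (fun x : EuclideanSpace ℝ (Fin d) =>
          Real.exp (-‖x‖ ^ 2 / (2 * σ ^ 2)) * F (inner ℝ x u))) := by
  classical
  set i₀ : Fin d := ⟨0, hd⟩
  -- an orthonormal basis whose `i₀`-th vector is `u`
  have horth : Orthonormal ℝ (({i₀} : Set (Fin d)).restrict (fun _ : Fin d => u)) := by
    constructor
    · intro i; exact hu
    · intro i j hij
      exact absurd (Subtype.ext (i.2.trans j.2.symm)) hij
  obtain ⟨b, hb⟩ := Orthonormal.exists_orthonormalBasis_extension_of_card_eq
      (𝕜 := ℝ) (by simp [finrank_euclideanSpace]) horth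
  have hbi : b i₀ = u := hb i₀ rfl
  -- the composite measure-preserving map `(Fin d → ℝ) → EuclideanSpace ℝ (Fin d)`
  set e₁ : (Fin d → ℝ) ≃ᵐ EuclideanSpace ℝ (Fin d) :=
    MeasurableEquiv.toLp 2 (Fin d → ℝ)
  set e₂ : EuclideanSpace ℝ (Fin d) ≃ᵐ EuclideanSpace ℝ (Fin d) := b.measurableEquiv.symm
  set T : (Fin d → ℝ) → EuclideanSpace ℝ (Fin d) := fun z => e₂ (e₁ z)
  have hT : MeasurePreserving T := by
    exact ((b.measurePreserving_measurableEquiv.symm)).comp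
      (EuclideanSpace.volume_preserving_symm_measurableEquiv_toLp (Fin d)).symm
  have hTemb : MeasurableEmbedding T :=
    (e₂.measurableEmbedding).comp (e₁.measurableEmbedding)
  -- the product form of the integrand
  set g : Fin d → ℝ → ℝ := fun i t =>
    Real.exp (-t ^ 2 / (2 * σ ^ 2)) * (if i = i₀ then F t else 1)
  have hkey : ∀ z : Fin d → ℝ,
      Real.exp (-‖T z‖ ^ 2 / (2 * σ ^ 2)) * F (inner ℝ (T z) u) = ∏ i, g i (z i) := by
    intro z
    have hTnorm : ‖T z‖ ^ 2 = ∑ i, z i ^ 2 := by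
      have : ‖T z‖ = ‖e₁ z‖ := by
        simp only [T, e₂]
        exact b.repr.symm.norm_map (e₁ z)
      rw [this]
      rw [EuclideanSpace.norm_eq]
      rw [Real.sq_sqrt (by positivity)]
      congr 1
      ext i
      simp [e₁, Real.norm_eq_abs, sq_abs]
    have hTinner : (inner ℝ (T z) u : ℝ) = z i₀ := by
      rw [← hbi, real_inner_comm]
      have : (inner ℝ (b i₀) (b.repr.symm (e₁ z)) : ℝ) = b.repr (b.repr.symm (e₁ z)) i₀ :=
        (b.repr_apply_apply _ _).symm
      show (inner ℝ (b i₀) (b.repr.symm (e₁ z)) : ℝ) = z i₀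
      rw [this, b.repr.apply_symm_apply]
      simp [e₁]
    rw [hTnorm, hTinner]
    rw [Finset.prod_mul_distrib, ← Real.exp_sum, Finset.prod_ite_eq']
    simp only [Finset.mem_univ, if_true]
    congr 2
    rw [← Finset.sum_div, ← Finset.sum_neg_distrib]
  constructor
  · -- the integral identity
    have h1 : (∫ x : EuclideanSpace ℝ (Fin d), Real.exp (-‖x‖ ^ 2 / (2 * σ ^ 2)) * F (inner ℝ x u))
        = ∫ z : Fin d → ℝ, ∏ i, g i (z i) := by
      rw [← hT.integral_comp hTemb]
      exact integral_congr_ae (Filter.Eventually.of_forall hkey)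
    rw [h1, MeasureTheory.integral_fintype_prod_volume_eq_prod]
    have h2 : ∀ i, (∫ t : ℝ, g i t)
        = if i = i₀ then (∫ t : ℝ, Real.exp (-t ^ 2 / (2 * σ ^ 2)) * F t)
          else ∫ t : ℝ, Real.exp (-t ^ 2 / (2 * σ ^ 2)) := by
      intro i
      split_ifs with h <;> simp [g, h]
    rw [Finset.prod_congr rfl (fun i _ => h2 i)]
    rw [← Finset.mul_prod_erase Finset.univ _ (Finset.mem_univ i₀)]
    rw [if_pos rfl]
    rw [Finset.prod_congr rfl (fun i hi => if_neg (Finset.ne_of_mem_erase hi))]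
    rw [Finset.prod_const, Finset.card_erase_of_mem (Finset.mem_univ i₀)]
    simp [mul_comm]
  · -- integrability
    intro hF
    have hInt : Integrable (fun z : Fin d → ℝ => ∏ i, g i (z i)) := by
      apply Integrable.fintype_prod (f := g)
      intro i
      by_cases h : i = i₀
      · simpa [g, h] using hF
      · simpa [g, h] using
          (by
            have : Integrable (fun t : ℝ => Real.exp (-(2 * σ ^ 2)⁻¹ * t ^ 2)) :=
              integrable_exp_neg_mul_sq (by positivity)
            refine this.congr ?_
            filter_upwards with t
            congr 1
            field_simp : Integrable (fun t : ℝ => Real.exp (-t ^ 2 / (2 * σ ^ 2))))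
    have := (hT.integrable_comp_emb hTemb
      (g := fun x : EuclideanSpace ℝ (Fin d) =>
        Real.exp (-‖x‖ ^ 2 / (2 * σ ^ 2)) * F (inner ℝ x u))).1
    apply this
    refine hInt.congr ?_
    filter_upwards with z
    exact (hkey z).symm

end Marg


set_option maxHeartbeats 1000000 in
lemma kl_main (σ : ℝ) (hσ : 0 < σ) (μ μ' : EuclideanSpace ℝ (Fin d))
    (hμ0 : μ ≠ 0) (hnorm : ‖μ‖ = ‖μ'‖) (hcpos : 0 ≤ (inner ℝ μ μ' : ℝ)) :
    (∫ x : EuclideanSpace ℝ (Fin d),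
        mixDen σ μ x * Real.log (mixDen σ μ x / mixDen σ μ' x))
      ≤ (‖μ‖ / (2 * σ)) ^ 4 * (1 - (inner ℝ μ μ' : ℝ) / ‖μ‖ ^ 2) := by
  have hσ2 : (2 * σ ^ 2) ≠ 0 := by positivity
  have hd : 0 < d := by
    rcases Nat.eq_zero_or_pos d with h0 | h
    · exfalso
      apply hμ0
      have : ‖μ‖ = 0 := by
        rw [EuclideanSpace.norm_eq]
        subst h0
        simp
      exact norm_eq_zero.1 this
    · exact h
  set m := ‖μ‖ with hm_def
  have hm : 0 < m := norm_pos_iff.2 hμ0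
  set u : EuclideanSpace ℝ (Fin d) := m⁻¹ • μ with hu_def
  set u' : EuclideanSpace ℝ (Fin d) := m⁻¹ • μ' with hu'_def
  have hμu : μ = m • u := by rw [hu_def, smul_inv_smul₀ hm.ne']
  have hμ'u : μ' = m • u' := by rw [hu'_def, smul_inv_smul₀ hm.ne']
  have hu : ‖u‖ = 1 := by
    rw [hu_def, norm_smul, Real.norm_eq_abs, abs_of_pos (inv_pos.2 hm), ← hm_def,
      inv_mul_cancel₀ hm.ne']
  have hu' : ‖u'‖ = 1 := by
    rw [hu'_def, norm_smul, Real.norm_eq_abs, abs_of_pos (inv_pos.2 hm), ← hnorm,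
      inv_mul_cancel₀ hm.ne']
  set c : ℝ := (inner ℝ μ μ' : ℝ) / m ^ 2 with hc_def
  have hc0 : 0 ≤ c := div_nonneg hcpos (by positivity)
  have hc1 : c ≤ 1 := by
    rw [hc_def, div_le_one (by positivity)]
    calc (inner ℝ μ μ' : ℝ) ≤ ‖μ‖ * ‖μ'‖ := real_inner_le_norm μ μ'
      _ = m ^ 2 := by rw [← hnorm, ← hm_def]; ring
  have huu' : (inner ℝ u u' : ℝ) = c := by
    have h : (inner ℝ u u' : ℝ) = m⁻¹ * (m⁻¹ * inner ℝ μ μ') := by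
      rw [hu_def, hu'_def, real_inner_smul_left, real_inner_smul_right]
    rw [h, hc_def, pow_two, div_eq_mul_inv, mul_inv]
    ring
  have hinμu : (inner ℝ μ u : ℝ) = m := by
    have h := real_inner_smul_left u u m
    rw [← hμu] at h
    rw [h, real_inner_self_eq_norm_sq, hu]
    ring
  have hinμu' : (inner ℝ μ u' : ℝ) = m * c := by
    have h := real_inner_smul_left u u' m
    rw [← hμu] at h
    rw [h, huu']
  set κ : ℝ := m / (2 * σ ^ 2) with hκ_def
  set α : ℝ := m ^ 2 / (4 * σ ^ 2) with hα_def
  set γ : ℝ := c * α with hγ_def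
  have hα0 : 0 ≤ α := by rw [hα_def]; positivity
  have hγ0 : 0 ≤ γ := mul_nonneg hc0 hα0
  have hγα : γ ≤ α := by
    rw [hγ_def]
    nlinarith
  have hκα : κ * (m / 2) = α := by rw [hκ_def, hα_def]; field_simp; ring
  set K : ℝ := (2 * Real.pi * σ ^ 2) ^ (-(d : ℝ) / 2) with hK_def
  have h2πσ : (0:ℝ) < 2 * Real.pi * σ ^ 2 := by positivity
  have hK : 0 < K := Real.rpow_pos_of_pos h2πσ _
  set N : ℝ := ∫ t : ℝ, Real.exp (-t ^ 2 / (2 * σ ^ 2)) with hN_def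
  have hN : N = Real.sqrt (2 * Real.pi * σ ^ 2) := by
    rw [hN_def]
    have : ∀ t : ℝ, -t ^ 2 / (2 * σ ^ 2) = -(2 * σ ^ 2)⁻¹ * t ^ 2 := fun t => by ring
    simp_rw [this]
    rw [integral_gaussian]
    congr 1
    field_simp
  have hN0 : 0 ≤ N := by rw [hN]; positivity
  -- density formula
  have hform : ∀ v : EuclideanSpace ℝ (Fin d), ‖v‖ = m → ∀ x,
      mixDen σ v x = (K * Real.exp (-m ^ 2 / (8 * σ ^ 2)) * Real.exp (-‖x‖ ^ 2 / (2 * σ ^ 2)))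
        * Real.cosh ((2 * σ ^ 2)⁻¹ * (inner ℝ x v : ℝ)) := by
    intro v hv x
    have hplus : ‖x - (1/2:ℝ) • v‖ ^ 2 = ‖x‖ ^ 2 - (inner ℝ x v : ℝ) + m ^ 2 / 4 := by
      rw [norm_sub_sq_real, real_inner_smul_right, norm_smul, Real.norm_eq_abs,
        abs_of_pos (by norm_num : (0:ℝ) < 1/2), hv]
      ring
    have hminus : ‖x - -((1/2:ℝ) • v)‖ ^ 2 = ‖x‖ ^ 2 + (inner ℝ x v : ℝ) + m ^ 2 / 4 := by
      rw [sub_neg_eq_add, norm_add_sq_real, real_inner_smul_right, norm_smul, Real.norm_eq_abs,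
        abs_of_pos (by norm_num : (0:ℝ) < 1/2), hv]
      ring
    have e1 : Real.exp (-(‖x‖ ^ 2 + (inner ℝ x v : ℝ) + m ^ 2 / 4) / (2 * σ ^ 2))
        = Real.exp (-m ^ 2 / (8 * σ ^ 2)) * Real.exp (-‖x‖ ^ 2 / (2 * σ ^ 2))
          * Real.exp (-((2 * σ ^ 2)⁻¹ * inner ℝ x v)) := by
      rw [← Real.exp_add, ← Real.exp_add]
      congr 1
      field_simp
      ring
    have e2 : Real.exp (-(‖x‖ ^ 2 - (inner ℝ x v : ℝ) + m ^ 2 / 4) / (2 * σ ^ 2))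
        = Real.exp (-m ^ 2 / (8 * σ ^ 2)) * Real.exp (-‖x‖ ^ 2 / (2 * σ ^ 2))
          * Real.exp ((2 * σ ^ 2)⁻¹ * inner ℝ x v) := by
      rw [← Real.exp_add, ← Real.exp_add]
      congr 1
      field_simp
      ring
    unfold mixDen gaussDen
    rw [hplus, hminus, e1, e2, Real.cosh_eq]
    ring
  -- log of the ratio
  have hlog : ∀ x, Real.log (mixDen σ μ x / mixDen σ μ' x)
      = lch (κ * (inner ℝ x u : ℝ)) - lch (κ * (inner ℝ x u' : ℝ)) := by
    intro x
    have hinμ : ((2 * σ ^ 2)⁻¹ * (inner ℝ x μ : ℝ)) = κ * inner ℝ x u := by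
      have h := real_inner_smul_right x u m
      rw [← hμu] at h
      rw [h, hκ_def]
      ring
    have hinμ' : ((2 * σ ^ 2)⁻¹ * (inner ℝ x μ' : ℝ)) = κ * inner ℝ x u' := by
      have h := real_inner_smul_right x u' m
      rw [← hμ'u] at h
      rw [h, hκ_def]
      ring
    have hpos : (0:ℝ) < K * Real.exp (-m ^ 2 / (8 * σ ^ 2)) * Real.exp (-‖x‖ ^ 2 / (2 * σ ^ 2)) :=
      by positivity
    rw [hform μ rfl x, hform μ' hnorm.symm x, mul_div_mul_left _ _ hpos.ne',
      Real.log_div (Real.cosh_pos _).ne' (Real.cosh_pos _).ne', hinμ, hinμ']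
    rfl
  -- pointwise identity for the integrand
  set G : EuclideanSpace ℝ (Fin d) → ℝ :=
    fun x => lch (κ * (inner ℝ x u : ℝ)) - lch (κ * (inner ℝ x u' : ℝ)) with hG_def
  have hpt : ∀ x, mixDen σ μ x * Real.log (mixDen σ μ x / mixDen σ μ' x)
      = K/2 * (Real.exp (-‖x - (1/2:ℝ) • μ‖ ^ 2 / (2 * σ ^ 2)) * G x)
        + K/2 * (Real.exp (-‖x + (1/2:ℝ) • μ‖ ^ 2 / (2 * σ ^ 2)) * G x) := by
    intro x
    rw [hlog x]
    have : mixDen σ μ x = K/2 * Real.exp (-‖x + (1/2:ℝ) • μ‖ ^ 2 / (2 * σ ^ 2))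
        + K/2 * Real.exp (-‖x - (1/2:ℝ) • μ‖ ^ 2 / (2 * σ ^ 2)) := by
      unfold mixDen gaussDen
      rw [sub_neg_eq_add]
      ring
    rw [this, hG_def]
    ring
  -- the Φ functions
  set Φ : EuclideanSpace ℝ (Fin d) → ℝ → EuclideanSpace ℝ (Fin d) → ℝ :=
    fun v a y => Real.exp (-‖y‖ ^ 2 / (2 * σ ^ 2)) * lch (κ * (inner ℝ y v : ℝ) + a) with hΦ_def
  have hIntΦ : ∀ v : EuclideanSpace ℝ (Fin d), ‖v‖ = 1 → ∀ a : ℝ, Integrable (Φ v a) := by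
    intro v hv a
    exact (marg hd σ hσ v hv (fun t => lch (κ * t + a))).2 (int1D hσ κ a)
  set J : ℝ → ℝ := fun a => ∫ t : ℝ, Real.exp (-t ^ 2 / (2 * σ ^ 2)) * lch (κ * t + a)
    with hJ_def
  have hMargΦ : ∀ v : EuclideanSpace ℝ (Fin d), ‖v‖ = 1 → ∀ a : ℝ,
      (∫ y, Φ v a y) = N ^ (d - 1) * J a := by
    intro v hv a
    exact (marg hd σ hσ v hv (fun t => lch (κ * t + a))).1
  -- inner product shifts
  have hsh_u : ∀ y : EuclideanSpace ℝ (Fin d),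
      (inner ℝ (y + (1/2:ℝ) • μ) u : ℝ) = inner ℝ y u + m / 2 := by
    intro y
    rw [inner_add_left, real_inner_smul_left, hinμu]
    ring
  have hsh_u' : ∀ y : EuclideanSpace ℝ (Fin d),
      (inner ℝ (y + (1/2:ℝ) • μ) u' : ℝ) = inner ℝ y u' + m / 2 * c := by
    intro y
    rw [inner_add_left, real_inner_smul_left, hinμu']
    ring
  have hsh_u_neg : ∀ y : EuclideanSpace ℝ (Fin d),
      (inner ℝ (y + -((1/2:ℝ) • μ)) u : ℝ) = inner ℝ y u - m / 2 := by
    intro y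
    rw [inner_add_left, inner_neg_left, real_inner_smul_left, hinμu]
    ring
  have hsh_u'_neg : ∀ y : EuclideanSpace ℝ (Fin d),
      (inner ℝ (y + -((1/2:ℝ) • μ)) u' : ℝ) = inner ℝ y u' - m / 2 * c := by
    intro y
    rw [inner_add_left, inner_neg_left, real_inner_smul_left, hinμu']
    ring
  -- argument recombinations
  have harg1 : ∀ t : ℝ, κ * (t + m / 2) = κ * t + α := by
    intro t; rw [mul_add, hκα]
  have harg2 : ∀ t : ℝ, κ * (t + m / 2 * c) = κ * t + γ := by
    intro t
    rw [mul_add, hγ_def, ← hκα]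
    ring
  have harg3 : ∀ t : ℝ, κ * (t - m / 2) = κ * t + -α := by
    intro t; rw [mul_sub, hκα]; ring
  have harg4 : ∀ t : ℝ, κ * (t - m / 2 * c) = κ * t + -γ := by
    intro t
    rw [mul_sub, hγ_def, ← hκα]
    ring
  -- translated integrals
  have hplus : (∫ x, Real.exp (-‖x - (1/2:ℝ) • μ‖ ^ 2 / (2 * σ ^ 2)) * G x)
      = (∫ y, Φ u α y) - ∫ y, Φ u' γ y := by
    have ht := (integral_add_right_eq_self (μ := volume)
      (fun x => Real.exp (-‖x - (1/2:ℝ) • μ‖ ^ 2 / (2 * σ ^ 2)) * G x) ((1/2:ℝ) • μ)).symm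
    rw [ht]
    rw [← integral_sub (hIntΦ u hu α) (hIntΦ u' hu' γ)]
    apply integral_congr_ae
    filter_upwards with y
    rw [add_sub_cancel_right, hG_def]
    simp only [hΦ_def]
    rw [hsh_u y, hsh_u' y, harg1, harg2]
    ring
  have hminus : (∫ x, Real.exp (-‖x + (1/2:ℝ) • μ‖ ^ 2 / (2 * σ ^ 2)) * G x)
      = (∫ y, Φ u (-α) y) - ∫ y, Φ u' (-γ) y := by
    have ht := (integral_add_right_eq_self (μ := volume)
      (fun x => Real.exp (-‖x + (1/2:ℝ) • μ‖ ^ 2 / (2 * σ ^ 2)) * G x) (-((1/2:ℝ) • μ))).symm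
    rw [ht]
    rw [← integral_sub (hIntΦ u hu (-α)) (hIntΦ u' hu' (-γ))]
    apply integral_congr_ae
    filter_upwards with y
    rw [neg_add_cancel_right, hG_def]
    simp only [hΦ_def]
    rw [hsh_u_neg y, hsh_u'_neg y, harg3, harg4]
    ring
  -- integrability of the two full pieces
  have hEGp : Integrable (fun x : EuclideanSpace ℝ (Fin d) =>
      Real.exp (-‖x - (1/2:ℝ) • μ‖ ^ 2 / (2 * σ ^ 2)) * G x) := by
    have h := ((hIntΦ u hu α).comp_sub_right ((1/2:ℝ) • μ)).sub
      ((hIntΦ u' hu' γ).comp_sub_right ((1/2:ℝ) • μ))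
    refine h.congr ?_
    filter_upwards with x
    simp only [hΦ_def, hG_def, Pi.sub_apply]
    have e1 : (inner ℝ (x - (1/2:ℝ) • μ) u : ℝ) = inner ℝ x u - m / 2 := by
      rw [sub_eq_add_neg, hsh_u_neg x]
    have e2 : (inner ℝ (x - (1/2:ℝ) • μ) u' : ℝ) = inner ℝ x u' - m / 2 * c := by
      rw [sub_eq_add_neg, hsh_u'_neg x]
    rw [e1, e2, harg3, harg4]
    have e3 : κ * (inner ℝ x u : ℝ) + -α + α = κ * inner ℝ x u := by ring
    have e4 : κ * (inner ℝ x u' : ℝ) + -γ + γ = κ * inner ℝ x u' := by ring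
    rw [e3, e4]
    ring
  have hEGm : Integrable (fun x : EuclideanSpace ℝ (Fin d) =>
      Real.exp (-‖x + (1/2:ℝ) • μ‖ ^ 2 / (2 * σ ^ 2)) * G x) := by
    have h := ((hIntΦ u hu (-α)).comp_sub_right (-((1/2:ℝ) • μ))).sub
      ((hIntΦ u' hu' (-γ)).comp_sub_right (-((1/2:ℝ) • μ)))
    refine h.congr ?_
    filter_upwards with x
    simp only [hΦ_def, hG_def, Pi.sub_apply]
    have e0 : x - -((1/2:ℝ) • μ) = x + (1/2:ℝ) • μ := by rw [sub_neg_eq_add]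
    rw [e0]
    have e1 : (inner ℝ (x + (1/2:ℝ) • μ) u : ℝ) = inner ℝ x u + m / 2 := hsh_u x
    have e2 : (inner ℝ (x + (1/2:ℝ) • μ) u' : ℝ) = inner ℝ x u' + m / 2 * c := hsh_u' x
    rw [e1, e2, harg1, harg2]
    have e3 : κ * (inner ℝ x u : ℝ) + α + -α = κ * inner ℝ x u := by ring
    have e4 : κ * (inner ℝ x u' : ℝ) + γ + -γ = κ * inner ℝ x u' := by ring
    rw [e3, e4]
    ring
  -- rewrite the LHS
  have hLHS : (∫ x : EuclideanSpace ℝ (Fin d),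
        mixDen σ μ x * Real.log (mixDen σ μ x / mixDen σ μ' x))
      = K/2 * ((∫ y, Φ u α y) - (∫ y, Φ u' γ y))
        + K/2 * ((∫ y, Φ u (-α) y) - ∫ y, Φ u' (-γ) y) := by
    rw [integral_congr_ae (Filter.Eventually.of_forall hpt)]
    rw [integral_add (hEGp.const_mul _) (hEGm.const_mul _)]
    rw [integral_const_mul, integral_const_mul, hplus, hminus]
  -- 1D comparison
  have hJint : ∀ a : ℝ, Integrable
      (fun t : ℝ => Real.exp (-t ^ 2 / (2 * σ ^ 2)) * lch (κ * t + a)) := int1D hσ κ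
  have hcomb : J α + J (-α) - (J γ + J (-γ)) ≤ 2 * α * (α - γ) * N := by
    have hsum : J α + J (-α) - (J γ + J (-γ))
        = ∫ t : ℝ, ((Real.exp (-t ^ 2 / (2 * σ ^ 2)) * lch (κ * t + α)
              + Real.exp (-t ^ 2 / (2 * σ ^ 2)) * lch (κ * t + -α))
            - (Real.exp (-t ^ 2 / (2 * σ ^ 2)) * lch (κ * t + γ)
              + Real.exp (-t ^ 2 / (2 * σ ^ 2)) * lch (κ * t + -γ))) := by
      simp only [hJ_def]
      have hpa : Integrable (fun t : ℝ => Real.exp (-t ^ 2 / (2 * σ ^ 2)) * lch (κ * t + α)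
          + Real.exp (-t ^ 2 / (2 * σ ^ 2)) * lch (κ * t + -α)) := (hJint α).add (hJint (-α))
      have hpg : Integrable (fun t : ℝ => Real.exp (-t ^ 2 / (2 * σ ^ 2)) * lch (κ * t + γ)
          + Real.exp (-t ^ 2 / (2 * σ ^ 2)) * lch (κ * t + -γ)) := (hJint γ).add (hJint (-γ))
      rw [integral_sub hpa hpg,
        integral_add (hJint α) (hJint (-α)), integral_add (hJint γ) (hJint (-γ))]
    rw [hsum]
    have hrhs : Integrable (fun t : ℝ => 2 * α * (α - γ) * Real.exp (-t ^ 2 / (2 * σ ^ 2))) := by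
      have hb : (0:ℝ) < (2 * σ ^ 2)⁻¹ := by positivity
      have hig : Integrable (fun t : ℝ => Real.exp (-(2 * σ ^ 2)⁻¹ * t ^ 2)) :=
        integrable_exp_neg_mul_sq hb
      refine (hig.const_mul (2 * α * (α - γ))).congr ?_
      filter_upwards with t
      congr 2
      ring
    calc (∫ t : ℝ, ((Real.exp (-t ^ 2 / (2 * σ ^ 2)) * lch (κ * t + α)
              + Real.exp (-t ^ 2 / (2 * σ ^ 2)) * lch (κ * t + -α))
            - (Real.exp (-t ^ 2 / (2 * σ ^ 2)) * lch (κ * t + γ)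
              + Real.exp (-t ^ 2 / (2 * σ ^ 2)) * lch (κ * t + -γ))))
        ≤ ∫ t : ℝ, 2 * α * (α - γ) * Real.exp (-t ^ 2 / (2 * σ ^ 2)) := by
          have hpa : Integrable (fun t : ℝ => Real.exp (-t ^ 2 / (2 * σ ^ 2)) * lch (κ * t + α)
              + Real.exp (-t ^ 2 / (2 * σ ^ 2)) * lch (κ * t + -α)) := (hJint α).add (hJint (-α))
          have hpg : Integrable (fun t : ℝ => Real.exp (-t ^ 2 / (2 * σ ^ 2)) * lch (κ * t + γ)
              + Real.exp (-t ^ 2 / (2 * σ ^ 2)) * lch (κ * t + -γ)) := (hJint γ).add (hJint (-γ))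
          apply integral_mono (hpa.sub hpg) hrhs
          intro t
          have hkp := key_pointwise (κ * t) hγ0 hγα
          have he : (0:ℝ) ≤ Real.exp (-t ^ 2 / (2 * σ ^ 2)) := (Real.exp_pos _).le
          have h1 : lch (κ * t + -α) = lch (κ * t - α) := by rw [sub_eq_add_neg]
          have h2 : lch (κ * t + -γ) = lch (κ * t - γ) := by rw [sub_eq_add_neg]
          simp only [Pi.sub_apply]
          rw [h1, h2]
          nlinarith [hkp, he]
      _ = 2 * α * (α - γ) * N := by rw [integral_const_mul, hN_def]
  -- final arithmetic
  have hNN : N ^ (d - 1) * N = N ^ d := by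
    rw [← pow_succ, Nat.sub_add_cancel hd]
  have hKN : K * N ^ d = 1 := by
    rw [hN, Real.sqrt_eq_rpow, hK_def]
    rw [← Real.rpow_natCast ((2 * Real.pi * σ ^ 2) ^ ((1:ℝ)/2)) d, ← Real.rpow_mul h2πσ.le,
      ← Real.rpow_add h2πσ]
    rw [show -(d : ℝ) / 2 + 1 / 2 * (d : ℕ) = 0 by push_cast; ring, Real.rpow_zero]
  have hfinal : K/2 * (N ^ (d-1) * J α - N ^ (d-1) * J γ)
      + K/2 * (N ^ (d-1) * J (-α) - N ^ (d-1) * J (-γ)) ≤ α * (α - γ) := by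
    have h1 : K/2 * (N ^ (d-1) * J α - N ^ (d-1) * J γ)
        + K/2 * (N ^ (d-1) * J (-α) - N ^ (d-1) * J (-γ))
        = K/2 * N ^ (d-1) * (J α + J (-α) - (J γ + J (-γ))) := by ring
    rw [h1]
    have h2 : K/2 * N ^ (d-1) * (J α + J (-α) - (J γ + J (-γ)))
        ≤ K/2 * N ^ (d-1) * (2 * α * (α - γ) * N) := by
      apply mul_le_mul_of_nonneg_left hcomb
      positivity
    refine h2.trans (le_of_eq ?_)
    have : K/2 * N ^ (d-1) * (2 * α * (α - γ) * N) = (K * N ^ d) * (α * (α - γ)) := by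
      rw [← hNN]; ring
    rw [this, hKN, one_mul]
  have hRHS : α * (α - γ) = (m / (2 * σ)) ^ 4 * (1 - (inner ℝ μ μ' : ℝ) / m ^ 2) := by
    rw [hγ_def, hα_def, hc_def]
    field_simp
    ring
  calc (∫ x : EuclideanSpace ℝ (Fin d),
        mixDen σ μ x * Real.log (mixDen σ μ x / mixDen σ μ' x))
      = K/2 * ((∫ y, Φ u α y) - (∫ y, Φ u' γ y))
        + K/2 * ((∫ y, Φ u (-α) y) - ∫ y, Φ u' (-γ) y) := hLHS
    _ = K/2 * (N ^ (d-1) * J α - N ^ (d-1) * J γ)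
        + K/2 * (N ^ (d-1) * J (-α) - N ^ (d-1) * J (-γ)) := by
        rw [hMargΦ u hu α, hMargΦ u' hu' γ, hMargΦ u hu (-α), hMargΦ u' hu' (-γ)]
    _ ≤ α * (α - γ) := hfinal
    _ = (m / (2 * σ)) ^ 4 * (1 - (inner ℝ μ μ' : ℝ) / m ^ 2) := hRHS


/-- KL bound between two symmetric isotropic Gaussian mixtures with rotated means:
`KL(P_θ, P_{θ'}) ≤ ξ⁴ (1 - cos β)` with `ξ = ‖μ‖/(2σ)` and
`cos β = |⟪μ, μ'⟫| / ‖μ‖²`. -/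
theorem kl_mixture_le (σ : ℝ) (hσ : 0 < σ) (μ μ' : EuclideanSpace ℝ (Fin d))
    (hnorm : ‖μ‖ = ‖μ'‖) :
    (∫ x : EuclideanSpace ℝ (Fin d),
        mixDen σ μ x * Real.log (mixDen σ μ x / mixDen σ μ' x))
      ≤ (‖μ‖ / (2 * σ)) ^ 4 * (1 - |(inner ℝ μ μ' : ℝ)| / ‖μ‖ ^ 2) := by
  by_cases hμ0 : μ = 0
  · subst hμ0
    have hμ'0 : μ' = 0 := by
      rw [norm_zero] at hnorm
      exact norm_eq_zero.1 hnorm.symm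
    subst hμ'0
    have hz : ∀ x : EuclideanSpace ℝ (Fin d),
        mixDen σ 0 x * Real.log (mixDen σ 0 x / mixDen σ 0 x) = 0 := by
      intro x
      rw [div_self (mixDen_pos hσ 0 x).ne', Real.log_one, mul_zero]
    rw [integral_congr_ae (Filter.Eventually.of_forall hz), integral_zero]
    simp
  · rcases le_or_gt 0 (inner ℝ μ μ' : ℝ) with hc | hc
    · rw [abs_of_nonneg hc]
      exact kl_main σ hσ μ μ' hμ0 hnorm hc
    · have h1 := kl_main σ hσ μ (-μ') hμ0 (by rw [norm_neg]; exact hnorm)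
        (by rw [inner_neg_right]; linarith)
      rw [abs_of_neg hc]
      simp only [inner_neg_right] at h1
      have h3 : (fun x => mixDen σ μ x * Real.log (mixDen σ μ x / mixDen σ μ' x))
          = fun x => mixDen σ μ x * Real.log (mixDen σ μ x / mixDen σ (-μ') x) :=
        funext fun x => by rw [mixDen_neg_arg σ μ' x]
      calc (∫ x : EuclideanSpace ℝ (Fin d),
            mixDen σ μ x * Real.log (mixDen σ μ x / mixDen σ μ' x))
          = ∫ x : EuclideanSpace ℝ (Fin d),
            mixDen σ μ x * Real.log (mixDen σ μ x / mixDen σ (-μ') x) := by rw [h3]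
        _ ≤ (‖μ‖ / (2 * σ)) ^ 4 * (1 - -(inner ℝ μ μ' : ℝ) / ‖μ‖ ^ 2) := h1
        _ = (‖μ‖ / (2 * σ)) ^ 4 * (1 - -(inner ℝ μ μ' : ℝ) / ‖μ‖ ^ 2) := rfl
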